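/- Let Λ be a finite-dimensional algebra, X and Y modules with Hom_Λ(X,Y) = 0, and let C = X^⊥ ∩ ^⊥Y. Let G(X) = ^⊥(X^⊥) be the torsion class generated by X. Then G(X) = ^⊥C ∩ ^⊥Y. -/

import Mathlib

open ModuleCat

variable (Λ : Type) [Ring Λ]

/-- The right hom-perpendicular class `X^⊥ = {N : Hom_Λ(X,N) = 0}` of a module. -/
def rightPerp (X : ModuleCat.{0} Λ) : Set (ModuleCat.{0} Λ) :=
  {N | ∀ f : X ⟶ N, f = 0}

/-- The left hom-perpendicular class `^⊥S = {M : Hom_Λ(M,N) = 0 for all N ∈ S}`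
of a class of modules. -/
def leftPerp (S : Set (ModuleCat.{0} Λ)) : Set (ModuleCat.{0} Λ) :=
  {M | ∀ N ∈ S, ∀ f : M ⟶ N, f = 0}

/-- Let `X`, `Y` be `Λ`-modules with `Hom_Λ(X,Y) = 0`, let
`C = X^⊥ ∩ ^⊥Y`, and let `G(X) = ^⊥(X^⊥)` be the torsion class generated by `X`.
Assuming the torsion-pair property (every module `M` has a canonical submodule
`rM ∈ G(X)` with `M/rM ∈ X^⊥`), we have `G(X) = ^⊥C ∩ ^⊥Y`. -/
theorem stmt_3 (X Y : ModuleCat.{0} Λ)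
    (hXY : ∀ f : X ⟶ Y, f = 0)
    (htorsion : ∀ M : ModuleCat.{0} Λ, ∃ r : Submodule Λ M,
      ModuleCat.of Λ r ∈ leftPerp Λ (rightPerp Λ X) ∧
      ModuleCat.of Λ (M ⧸ r) ∈ rightPerp Λ X) :
    leftPerp Λ (rightPerp Λ X) =
      leftPerp Λ (rightPerp Λ X ∩ {M | ∀ f : M ⟶ Y, f = 0}) ∩
      {M | ∀ f : M ⟶ Y, f = 0} := by
  ext M
  constructor
  · intro hM
    exact ⟨fun N hN f => hM N hN.1 f, fun f => hM Y hXY f⟩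
  · rintro ⟨hM1, hM2⟩
    intro N hN f
    obtain ⟨r, hr1, hr2⟩ := htorsion M
    -- the quotient `M ⧸ r` lies in `C = X^⊥ ∩ ^⊥Y`
    have hC : ModuleCat.of Λ (M ⧸ r) ∈
        rightPerp Λ X ∩ {M : ModuleCat.{0} Λ | ∀ f : M ⟶ Y, f = 0} := by
      refine ⟨hr2, fun g => ?_⟩
      have h0 : (ModuleCat.ofHom (g.hom.comp r.mkQ) : M ⟶ Y) = 0 := hM2 _
      apply ModuleCat.hom_ext; apply LinearMap.ext
      intro x
      obtain ⟨y, rfl⟩ := r.mkQ_surjective x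
      exact congrArg (fun h => h.hom y) h0
    -- hence the quotient map is zero, so `r = ⊤`
    have hπ : (ModuleCat.ofHom r.mkQ : M ⟶ ModuleCat.of Λ (M ⧸ r)) = 0 := hM1 _ hC _
    have hrtop : r = ⊤ := by
      rw [Submodule.eq_top_iff']
      intro x
      have hx : r.mkQ x = 0 := congrArg (fun h => h.hom x) hπ
      rwa [← Submodule.Quotient.mk_eq_zero]
    -- `f` vanishes on `r = ⊤`
    have hsub : (ModuleCat.ofHom (f.hom.comp r.subtype) : ModuleCat.of Λ r ⟶ N) = 0 := hr1 N hN _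
    apply ModuleCat.hom_ext; apply LinearMap.ext
    intro x
    have hx : x ∈ r := hrtop ▸ Submodule.mem_top
    exact congrArg (fun h => h.hom ⟨x, hx⟩) hsub
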